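/- arXiv:0904.0922 — 5 statements merged into one kernel-verified Lean document; each statement's English description precedes it below -/
import Mathlib

section
/- (Tate-type integral, one variable.) For φ ∈ 𝒮(ℝ), the function Z(φ,s) = ∫_{ℝ^×} φ(t)|t|^{s-1} dt, initially defined and holomorphic for Re(s) > 0, extends to a meromorphic function on ℂ, and for each polynomial p and each vertical strip a ≤ Re(s) ≤ b avoiding the poles, the product p(s)·Z(φ,s) is bounded as |Im s| → ∞ in that strip. -/
open MeasureTheory Set Filter Asymptotics Complex

noncomputable section

namespace Stmt8Aux

/-- iterated derivative within Schwartz space -/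
def It (n : ℕ) (f : SchwartzMap ℝ ℂ) : SchwartzMap ℝ ℂ :=
  (fun g => SchwartzMap.derivCLM ℝ ℂ g)^[n] f

lemma It_succ (n : ℕ) (f : SchwartzMap ℝ ℂ) :
    It (n+1) f = SchwartzMap.derivCLM ℝ ℂ (It n f) := Function.iterate_succ_apply' _ n f

lemma sBigOTop (f : SchwartzMap ℝ ℂ) (a : ℝ) :
    (⇑f) =O[atTop] fun x : ℝ => x ^ (-a) := by
  have h1 : (⇑f) =O[atTop] fun x : ℝ => ‖x‖ ^ (-a) := by
    refine (f.isBigO_cocompact_rpow (-a)).mono ?_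
    rw [cocompact_eq_atBot_atTop]; exact le_sup_right
  refine h1.congr' EventuallyEq.rfl ?_
  filter_upwards [eventually_ge_atTop (0:ℝ)] with x hx
  rw [Real.norm_of_nonneg hx]

lemma sBigOZero (f : SchwartzMap ℝ ℂ) :
    (⇑f) =O[nhdsWithin 0 (Ioi 0)] fun x : ℝ => x ^ (-(0:ℝ)) := by
  have : Tendsto (⇑f) (nhdsWithin 0 (Ioi 0)) (nhds (f 0)) :=
    (f.continuous.tendsto 0).mono_left nhdsWithin_le_nhds
  simpa [neg_zero, Real.rpow_zero] using this.isBigO_one ℝ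

lemma mconv (f : SchwartzMap ℝ ℂ) {s : ℂ} (hs : 0 < s.re) : MellinConvergent (⇑f) s :=
  mellinConvergent_of_isBigO_rpow
    (f.continuous.locallyIntegrable.locallyIntegrableOn _)
    (sBigOTop f (s.re + 1)) (by linarith) (sBigOZero f) (by simpa using hs)

lemma mdiff (f : SchwartzMap ℝ ℂ) {s : ℂ} (hs : 0 < s.re) :
    DifferentiableAt ℂ (mellin (⇑f)) s :=
  mellin_differentiableAt_of_isBigO_rpow
    (f.continuous.locallyIntegrable.locallyIntegrableOn _)
    (sBigOTop f (s.re + 1)) (by linarith) (sBigOZero f) (by simpa using hs)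

end Stmt8Aux

noncomputable section

namespace Stmt8AuxB

variable (f : SchwartzMap ℝ ℂ)

lemma fbound : ∃ C : ℝ, 0 < C ∧ ∀ x : ℝ, ‖f x‖ ≤ C := by
  obtain ⟨C, hC, h⟩ := f.decay 0 0
  exact ⟨C, hC, fun x => by simpa using h x⟩

lemma ibp {s : ℂ} (hs : 0 < s.re) :
    s * mellin (⇑f) s + mellin (⇑(SchwartzMap.derivCLM ℝ ℂ f)) (s + 1) = 0 := by
  have hs0 : s ≠ 0 := fun h => by simp [h] at hs
  set G : ℝ → ℂ := fun t => if 0 < t then (t:ℂ) ^ s * f t else 0 with hGdef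
  set G' : ℝ → ℂ := fun t => s * ((t:ℂ) ^ (s-1) * f t) + (t:ℂ) ^ s * deriv (⇑f) t with hG'def
  have hpow : ∀ t : ℝ, 0 < t → HasDerivAt (fun y : ℝ => (y:ℂ) ^ s) (s * (t:ℂ)^(s-1)) t := by
    intro t ht
    have hr : s - 1 ≠ -1 := by
      intro h; apply hs0; linear_combination h
    have h0 := hasDerivAt_ofReal_cpow_const' (ne_of_gt ht) hr
    simp only [sub_add_cancel] at h0
    have h1 := h0.const_mul s
    have he : (fun y : ℝ => s * ((y:ℂ)^s / s)) = fun y : ℝ => (y:ℂ)^s := by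
      funext y; rw [mul_comm, div_mul_cancel₀ _ hs0]
    rwa [he] at h1
  obtain ⟨C, hC0, hC⟩ := fbound f
  have hcont : ContinuousWithinAt G (Ici 0) 0 := by
    have hG0 : G 0 = 0 := by simp [hGdef]
    rw [ContinuousWithinAt, hG0]
    have hb : ∀ t : ℝ, ‖G t‖ ≤ C * |t| ^ s.re := by
      intro t
      by_cases ht : 0 < t
      · simp only [hGdef, if_pos ht]
        rw [norm_mul, norm_cpow_eq_rpow_re_of_pos ht,
          abs_of_pos ht, mul_comm]
        exact mul_le_mul_of_nonneg_right (hC t) (Real.rpow_nonneg (le_of_lt ht) _)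
      · simp only [hGdef, if_neg ht, norm_zero]
        positivity
    have htend : Tendsto (fun t : ℝ => C * |t| ^ s.re) (nhdsWithin 0 (Ici 0)) (nhds 0) := by
      have hc : ContinuousAt (fun t : ℝ => |t| ^ s.re) 0 := by
        apply ContinuousAt.rpow_const (_root_.continuous_abs.continuousAt)
        right; exact le_of_lt hs
      have : Tendsto (fun t : ℝ => |t| ^ s.re) (nhds 0) (nhds 0) := by
        have := hc.tendsto
        simpa [Real.zero_rpow (ne_of_gt hs)] using this
      simpa [mul_zero] using ((this.const_mul C).mono_left nhdsWithin_le_nhds)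
    exact squeeze_zero_norm' (Eventually.of_forall hb) htend
  have htop : Tendsto G atTop (nhds 0) := by
    set k : ℕ := ⌈s.re⌉₊ + 1 with hk
    obtain ⟨D, hD0, hD⟩ := f.decay k 0
    have hD' : ∀ x : ℝ, ‖x‖ ^ k * ‖f x‖ ≤ D := by
      intro x; simpa using hD x
    have hb : ∀ᶠ t : ℝ in atTop, ‖G t‖ ≤ D * t ^ (s.re - k) := by
      filter_upwards [eventually_ge_atTop (1:ℝ)] with t ht
      have ht0 : 0 < t := lt_of_lt_of_le one_pos ht
      simp only [hGdef, if_pos ht0]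
      rw [norm_mul, norm_cpow_eq_rpow_re_of_pos ht0]
      have hf' : ‖f t‖ ≤ D / t ^ (k:ℝ) := by
        rw [le_div_iff₀ (Real.rpow_pos_of_pos ht0 _)]
        have := hD' t
        rw [Real.norm_of_nonneg (le_of_lt ht0)] at this
        rw [mul_comm, ← Real.rpow_natCast t k] at this
        exact this
      calc t ^ s.re * ‖f t‖ ≤ t ^ s.re * (D / t ^ (k:ℝ)) := by
            exact mul_le_mul_of_nonneg_left hf' (Real.rpow_nonneg (le_of_lt ht0) _)
        _ = D * t ^ (s.re - k) := by
            rw [Real.rpow_sub ht0]; ring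
    have htend : Tendsto (fun t : ℝ => D * t ^ (s.re - k)) atTop (nhds 0) := by
      have hneg : (0:ℝ) < (k:ℝ) - s.re := by
        have : s.re < (k:ℝ) := by
          have := Nat.le_ceil s.re
          have h2 : (⌈s.re⌉₊ : ℝ) < (k:ℝ) := by
            rw [hk]; push_cast; linarith
          linarith
        linarith
      have := (tendsto_rpow_neg_atTop hneg).const_mul D
      simpa [neg_sub, mul_zero] using this
    exact squeeze_zero_norm' hb htend
  have hderiv : ∀ x ∈ Ioi (0:ℝ), HasDerivAt G (G' x) x := by
    intro x hx
    have h1 := (hpow x hx).mul (f.differentiable.differentiableAt.hasDerivAt)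
    have h2 : HasDerivAt (fun y : ℝ => (y:ℂ)^s * f y)
        (s * ((x:ℂ)^(s-1) * f x) + (x:ℂ)^s * deriv (⇑f) x) x := by
      convert h1 using 1
      · rfl
      · funext y; simp [Pi.mul_apply]
      · ring
    apply h2.congr_of_eventuallyEq
    filter_upwards [Ioi_mem_nhds hx] with y hy
    simp only [hGdef, if_pos (mem_Ioi.mp hy)]
  have hint1 : IntegrableOn (fun t : ℝ => s * ((t:ℂ)^(s-1) * f t)) (Ioi 0) := by
    have h0 : IntegrableOn (fun t : ℝ => (t:ℂ)^(s-1) • f t) (Ioi 0) := Stmt8Aux.mconv f hs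
    have := h0.const_mul s
    simpa [smul_eq_mul, mul_assoc, IntegrableOn] using this
  have hint2 : IntegrableOn (fun t : ℝ => (t:ℂ)^s * deriv (⇑f) t) (Ioi 0) := by
    have hs1 : 0 < (s+1).re := by simp [Complex.add_re]; linarith
    have h := Stmt8Aux.mconv (SchwartzMap.derivCLM ℝ ℂ f) hs1
    have he : (fun t : ℝ => ((t:ℂ))^((s+1)-1) • (SchwartzMap.derivCLM ℝ ℂ f) t)
        = fun t : ℝ => (t:ℂ)^s * deriv (⇑f) t := by
      funext t; rw [add_sub_cancel_right, smul_eq_mul, SchwartzMap.derivCLM_apply]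
    rwa [MellinConvergent, he] at h
  have f'int : IntegrableOn G' (Ioi 0) := hint1.add hint2
  have key := integral_Ioi_of_hasDerivAt_of_tendsto hcont hderiv f'int htop
  have hG0 : G 0 = 0 := by simp [hGdef]
  rw [hG0, sub_zero] at key
  have hsplit : ∫ x in Ioi (0:ℝ), G' x
      = (∫ x in Ioi (0:ℝ), s * ((x:ℂ)^(s-1) * f x)) + ∫ x in Ioi (0:ℝ), (x:ℂ)^s * deriv (⇑f) x :=
    integral_add hint1 hint2
  rw [key] at hsplit
  have hm1 : s * mellin (⇑f) s = ∫ x in Ioi (0:ℝ), s * ((x:ℂ)^(s-1) * f x) := by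
    rw [mellin, ← smul_eq_mul, ← integral_smul]
    simp [smul_eq_mul]
  have hm2 : mellin (⇑(SchwartzMap.derivCLM ℝ ℂ f)) (s+1)
      = ∫ x in Ioi (0:ℝ), (x:ℂ)^s * deriv (⇑f) x := by
    rw [mellin]
    congr 1; funext x
    rw [add_sub_cancel_right, smul_eq_mul, SchwartzMap.derivCLM_apply]
  rw [hm1, hm2]
  linear_combination -hsplit

def Ffam (f : SchwartzMap ℝ ℂ) (n : ℕ) (s : ℂ) : ℂ :=
  (∏ k ∈ Finset.range n, (s + (k:ℂ)))⁻¹ * ((-1)^n * mellin (⇑(Stmt8Aux.It n f)) (s + (n:ℂ)))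

lemma Ffam_zero (f : SchwartzMap ℝ ℂ) (s : ℂ) : Ffam f 0 s = mellin (⇑f) s := by
  simp [Ffam, Stmt8Aux.It]

lemma step (f : SchwartzMap ℝ ℂ) (n : ℕ) {s : ℂ} (h : -(n:ℝ) < s.re) :
    Ffam f n s = Ffam f (n+1) s := by
  have hw : 0 < (s + (n:ℂ)).re := by
    simp only [Complex.add_re, Complex.natCast_re]; linarith
  have hne : (s + (n:ℂ)) ≠ 0 := by
    intro h0; rw [h0] at hw; simp at hw
  have h2 := ibp (Stmt8Aux.It n f) hw
  set A := mellin (⇑(Stmt8Aux.It n f)) (s + (n:ℂ)) with hA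
  set B := mellin (⇑(SchwartzMap.derivCLM ℝ ℂ (Stmt8Aux.It n f))) (s + (n:ℂ) + 1) with hB
  have hA2 : A = (s + (n:ℂ))⁻¹ * -B := by
    have h3 : (s + (n:ℂ)) * A = -B := eq_neg_of_add_eq_zero_left h2
    rw [← h3, inv_mul_cancel_left₀ hne]
  unfold Ffam
  rw [Finset.prod_range_succ, Stmt8Aux.It_succ]
  have hcast : ((n+1 : ℕ) : ℂ) = (n:ℂ) + 1 := by push_cast; ring
  rw [hcast, ← add_assoc, ← hB, ← hA, hA2, mul_inv]
  ring

lemma mono (f : SchwartzMap ℝ ℂ) {s : ℂ} {n m : ℕ} (h : n ≤ m) (hs : -(n:ℝ) < s.re) :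
    Ffam f n s = Ffam f m s := by
  induction m, h using Nat.le_induction with
  | base => rfl
  | succ m hm ih =>
    refine ih.trans (step f m ?_)
    have : -(m:ℝ) ≤ -(n:ℝ) := neg_le_neg (by exact_mod_cast hm)
    linarith

def Nn (s : ℂ) : ℕ := ⌈|s.re|⌉₊ + 1

lemma neg_Nn_lt (s : ℂ) : -((Nn s : ℝ)) < s.re := by
  have h1 : |s.re| ≤ (⌈|s.re|⌉₊ : ℝ) := Nat.le_ceil _
  have h2 : -s.re ≤ |s.re| := neg_le_abs _
  have : ((Nn s : ℕ) : ℝ) = (⌈|s.re|⌉₊ : ℝ) + 1 := by simp [Nn]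
  rw [this]; linarith

def Zdef (f : SchwartzMap ℝ ℂ) (s : ℂ) : ℂ := Ffam f (Nn s) s

lemma Zdef_eq (f : SchwartzMap ℝ ℂ) {s : ℂ} {m : ℕ} (hm : Nn s ≤ m) :
    Zdef f s = Ffam f m s :=
  mono f hm (neg_Nn_lt s)

lemma Zdef_eq_mellin (f : SchwartzMap ℝ ℂ) {s : ℂ} (hs : 0 < s.re) :
    Zdef f s = mellin (⇑f) s := by
  rw [Zdef, ← Ffam_zero f s]
  exact (mono f (Nat.zero_le _) (by simpa using hs)).symm

lemma hIint (f : SchwartzMap ℝ ℂ) {σ : ℝ} (hσ : 0 < σ) :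
    IntegrableOn (fun t : ℝ => t ^ (σ - 1) * ‖f t‖) (Ioi 0) := by
  have h : IntegrableOn (fun t : ℝ => ‖(t:ℂ) ^ ((σ:ℂ)-1) • f t‖) (Ioi 0) :=
    (Stmt8Aux.mconv f (s := (σ:ℂ)) (by simpa using hσ)).norm
  refine IntegrableOn.congr_fun h ?_ measurableSet_Ioi
  intro t ht
  dsimp only
  rw [norm_smul]
  have : ‖(t:ℂ) ^ ((σ:ℂ)-1)‖ = t ^ (((σ:ℂ)-1).re) := by
    rw [← Complex.ofReal_one, ← Complex.ofReal_sub]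
    exact norm_cpow_eq_rpow_re_of_pos ht _
  rw [this]; norm_num

lemma norm_mellin_le (f : SchwartzMap ℝ ℂ) {w : ℂ} (hw : 0 < w.re) :
    ‖mellin (⇑f) w‖ ≤ ∫ t in Ioi (0:ℝ), t ^ (w.re - 1) * ‖f t‖ := by
  refine (norm_integral_le_integral_norm _).trans (le_of_eq ?_)
  refine setIntegral_congr_fun measurableSet_Ioi ?_
  intro t ht
  dsimp only
  rw [norm_smul, norm_cpow_eq_rpow_re_of_pos ht,
    Complex.sub_re, Complex.one_re]

lemma ubound (f : SchwartzMap ℝ ℂ) (c : ℝ) (hc : 1 ≤ c) :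
    ∃ B : ℝ, 0 ≤ B ∧ ∀ w : ℂ, 1 ≤ w.re → w.re ≤ c → ‖mellin (⇑f) w‖ ≤ B := by
  set B1 : ℝ := ∫ t in Ioc (0:ℝ) 1, ‖f t‖ with hB1
  set B2 : ℝ := ∫ t in Ioi (1:ℝ), t ^ (c - 1) * ‖f t‖ with hB2
  have hB1i : IntegrableOn (fun t : ℝ => ‖f t‖) (Ioc (0:ℝ) 1) :=
    f.continuous.norm.integrableOn_Ioc
  have hB2i : IntegrableOn (fun t : ℝ => t ^ (c - 1) * ‖f t‖) (Ioi (1:ℝ)) :=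
    (hIint f (lt_of_lt_of_le one_pos hc)).mono_set (Ioi_subset_Ioi zero_le_one)
  refine ⟨B1 + B2, ?_, ?_⟩
  · have h1 : 0 ≤ B1 := setIntegral_nonneg measurableSet_Ioc (fun t _ => norm_nonneg _)
    have h2 : 0 ≤ B2 := setIntegral_nonneg measurableSet_Ioi
      (fun t ht => mul_nonneg (Real.rpow_nonneg (le_trans zero_le_one (le_of_lt ht)) _)
        (norm_nonneg _))
    linarith
  intro w hw1 hwc
  have hw0 : 0 < w.re := lt_of_lt_of_le one_pos hw1
  have hwint : IntegrableOn (fun t : ℝ => t ^ (w.re - 1) * ‖f t‖) (Ioi 0) := hIint f hw0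
  refine (norm_mellin_le f hw0).trans ?_
  have hsplit : (Ioc (0:ℝ) 1) ∪ (Ioi (1:ℝ)) = Ioi (0:ℝ) := Ioc_union_Ioi_eq_Ioi zero_le_one
  rw [← hsplit, setIntegral_union (Ioc_disjoint_Ioi le_rfl) measurableSet_Ioi
    (hwint.mono_set (by rw [← hsplit]; exact subset_union_left))
    (hwint.mono_set (by rw [← hsplit]; exact subset_union_right))]
  have hle1 : (∫ t in Ioc (0:ℝ) 1, t ^ (w.re - 1) * ‖f t‖) ≤ B1 := by
    refine setIntegral_mono_on
      (hwint.mono_set (by rw [← hsplit]; exact subset_union_left)) hB1i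
      measurableSet_Ioc ?_
    intro t ht
    have h01 : t ^ (w.re - 1) ≤ 1 :=
      Real.rpow_le_one (le_of_lt ht.1) ht.2 (by linarith)
    calc t ^ (w.re - 1) * ‖f t‖ ≤ 1 * ‖f t‖ :=
          mul_le_mul_of_nonneg_right h01 (norm_nonneg _)
      _ = ‖f t‖ := one_mul _
  have hle2 : (∫ t in Ioi (1:ℝ), t ^ (w.re - 1) * ‖f t‖) ≤ B2 := by
    refine setIntegral_mono_on
      (hwint.mono_set (by rw [← hsplit]; exact subset_union_right)) hB2i
      measurableSet_Ioi ?_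
    intro t ht
    exact mul_le_mul_of_nonneg_right
      (Real.rpow_le_rpow_of_exponent_le (le_of_lt ht) (by linarith)) (norm_nonneg _)
  linarith

def negC (φ : SchwartzMap ℝ ℂ) : SchwartzMap ℝ ℂ :=
  SchwartzMap.compCLMOfContinuousLinearEquiv ℝ (ContinuousLinearEquiv.neg ℝ) φ

lemma negC_apply (φ : SchwartzMap ℝ ℂ) (t : ℝ) : negC φ t = φ (-t) := rfl

lemma split (φ : SchwartzMap ℝ ℂ) {s : ℂ} (hs : 0 < s.re) :
    ∫ t : ℝ, φ t * ((|t| : ℝ) : ℂ) ^ (s - 1) = mellin (⇑(φ + negC φ)) s := by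
  set h : ℝ → ℂ := fun t => φ t * ((|t| : ℝ) : ℂ) ^ (s - 1) with hh
  have hIoi : IntegrableOn h (Ioi 0) := by
    refine IntegrableOn.congr_fun (Stmt8Aux.mconv φ hs) ?_ measurableSet_Ioi
    intro t ht
    simp only [hh]
    rw [abs_of_pos (mem_Ioi.mp ht), smul_eq_mul, mul_comm]
  have hIoi' : IntegrableOn (fun t => h (-t)) (Ioi 0) := by
    refine IntegrableOn.congr_fun (Stmt8Aux.mconv (negC φ) hs) ?_ measurableSet_Ioi
    intro t ht
    simp only [hh]
    rw [abs_neg, abs_of_pos (mem_Ioi.mp ht), smul_eq_mul, mul_comm, negC_apply]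
  have hIic : IntegrableOn h (Iic 0) := by
    have hiff := (Measure.measurePreserving_neg (volume : Measure ℝ)).integrableOn_comp_preimage
      (Homeomorph.neg ℝ).measurableEmbedding (f := h) (s := Iic (0:ℝ))
    rw [← hiff]
    have : (Neg.neg ⁻¹' (Iic (0:ℝ))) = Ici 0 := by
      ext x; simp
    rw [this]
    exact (integrableOn_Ici_iff_integrableOn_Ioi).2 hIoi'
  have h1 : (∫ t in Iic (0:ℝ), h t) + ∫ t in Ioi (0:ℝ), h t = ∫ t : ℝ, h t :=
    intervalIntegral.integral_Iic_add_Ioi hIic hIoi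
  have h2 : (∫ t in Iic (0:ℝ), h t) = ∫ t in Ioi (0:ℝ), h (-t) := by
    have := integral_comp_neg_Iic (0:ℝ) (fun x => h (-x))
    simp only [neg_neg, neg_zero] at this
    exact this
  have h3 : (∫ t in Ioi (0:ℝ), h (-t)) + ∫ t in Ioi (0:ℝ), h t
      = ∫ t in Ioi (0:ℝ), (h (-t) + h t) := (integral_add hIoi' hIoi).symm
  have h4 : (∫ t in Ioi (0:ℝ), (h (-t) + h t)) = mellin (⇑(φ + negC φ)) s := by
    rw [mellin]
    refine setIntegral_congr_fun measurableSet_Ioi ?_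
    intro t ht
    have ht0 : (0:ℝ) < t := mem_Ioi.mp ht
    simp only [hh]
    rw [abs_neg, abs_of_pos ht0, smul_eq_mul]
    simp only [SchwartzMap.add_apply, negC_apply]
    ring
  rw [← h1, h2, h3, h4]

lemma mellin_shift_analyticAt (f : SchwartzMap ℝ ℂ) (M : ℕ) {z : ℂ} (hz : -(M:ℝ) < z.re) :
    AnalyticAt ℂ (fun s => mellin (⇑f) (s + (M:ℂ))) z := by
  have hU : IsOpen {s : ℂ | -(M:ℝ) < s.re} := isOpen_lt continuous_const Complex.continuous_re
  refine DifferentiableOn.analyticAt (s := {s : ℂ | -(M:ℝ) < s.re}) ?_ (hU.mem_nhds hz)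
  intro w hw
  have hw' : 0 < (w + (M:ℂ)).re := by
    simp only [Complex.add_re, Complex.natCast_re]
    have : -(M:ℝ) < w.re := hw
    linarith
  exact ((Stmt8Aux.mdiff f hw').comp w
    ((differentiable_id.add_const ((M:ℕ):ℂ)) w)).differentiableWithinAt

lemma prod_analytic (M : ℕ) (z : ℂ) :
    AnalyticAt ℂ (fun s : ℂ => ∏ k ∈ Finset.range M, (s + (k:ℂ))) z := by
  induction M with
  | zero => simpa using analyticAt_const
  | succ m ih =>
    simp only [Finset.prod_range_succ]
    exact ih.mul ((analyticAt_id).add analyticAt_const)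

lemma Ffam_meromorphicAt (f : SchwartzMap ℝ ℂ) (M : ℕ) (z : ℂ) (hz : -(M:ℝ) < z.re) :
    MeromorphicAt (Ffam f M) z := by
  have h1 : MeromorphicAt (fun s : ℂ => (∏ k ∈ Finset.range M, (s + (k:ℂ)))⁻¹) z :=
    (prod_analytic M z).meromorphicAt.inv
  have h2 : MeromorphicAt (fun s : ℂ => (-1:ℂ)^M * mellin (⇑(Stmt8Aux.It M f)) (s + (M:ℂ))) z :=
    (analyticAt_const.mul (mellin_shift_analyticAt (Stmt8Aux.It M f) M hz)).meromorphicAt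
  exact h1.mul h2

end Stmt8AuxB

end

set_option maxHeartbeats 1000000 in
open Stmt8AuxB Stmt8Aux in
/-- Tate-type integral in one variable: for `φ ∈ 𝒮(ℝ)`, the function
`Z(φ,s) = ∫_{ℝ^×} φ(t)|t|^{s-1} dt`, initially defined and holomorphic for `Re(s) > 0`,
extends to a meromorphic function on `ℂ`, and for each polynomial `p` and each vertical
strip `a ≤ Re(s) ≤ b` avoiding the poles (i.e. on which the extension is analytic), the
product `p(s)·Z(φ,s)` is bounded as `|Im s| → ∞` in that strip. -/
theorem stmt8 (φ : SchwartzMap ℝ ℂ) :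
    ∃ Z : ℂ → ℂ,
      (∀ s : ℂ, 0 < s.re → Z s = ∫ t : ℝ, φ t * ((|t| : ℝ) : ℂ) ^ (s - 1)) ∧
      DifferentiableOn ℂ Z {s : ℂ | 0 < s.re} ∧
      MeromorphicOn Z Set.univ ∧
      ∀ (p : Polynomial ℂ) (a b : ℝ), a ≤ b →
        (∀ s : ℂ, a ≤ s.re → s.re ≤ b → AnalyticAt ℂ Z s) →
        ∃ C : ℝ, ∃ Δ : ℝ, 0 < Δ ∧ ∀ s : ℂ, a ≤ s.re → s.re ≤ b → Δ ≤ |s.im| →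
          ‖p.eval s * Z s‖ ≤ C := by
  classical
  set ψ : SchwartzMap ℝ ℂ := φ + negC φ with hψ
  refine ⟨Zdef ψ, ?_, ?_, ?_, ?_⟩
  · intro s hs
    rw [Zdef_eq_mellin ψ hs, ← split φ hs]
  · refine DifferentiableOn.congr (f := mellin (⇑ψ)) ?_ ?_
    · intro w hw; exact (mdiff ψ hw).differentiableWithinAt
    · intro w hw; exact Zdef_eq_mellin ψ hw
  · intro z _
    set M : ℕ := ⌈|z.re|⌉₊ + 2 with hM
    have hc1 : |z.re| ≤ (⌈|z.re|⌉₊ : ℝ) := Nat.le_ceil _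
    have hc2 : -z.re ≤ |z.re| := neg_le_abs _
    have hMr : (M:ℝ) = (⌈|z.re|⌉₊ : ℝ) + 2 := by rw [hM]; push_cast; ring
    have hzM : -(M:ℝ) < z.re := by rw [hMr]; linarith
    have hmero := Ffam_meromorphicAt ψ M z hzM
    refine hmero.congr ?_
    refine Filter.eventuallyEq_of_mem
      (mem_nhdsWithin_of_mem_nhds (Metric.ball_mem_nhds z one_pos)) ?_
    intro s hs
    have hd : dist s z < 1 := Metric.mem_ball.mp hs
    have hre : |s.re - z.re| ≤ dist s z := by
      rw [Complex.dist_eq, ← Complex.sub_re]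
      exact Complex.abs_re_le_norm (s - z)
    have habs : |s.re| ≤ |z.re| + 1 := by
      have h1 : |s.re| - |z.re| ≤ |s.re - z.re| := abs_sub_abs_le_abs_sub _ _
      linarith
    have hN : Nn s ≤ M := by
      have h2 : ⌈|s.re|⌉₊ ≤ ⌈|z.re| + 1⌉₊ := Nat.ceil_mono habs
      rw [Nat.ceil_add_one (abs_nonneg _)] at h2
      simp only [Nn, hM]; omega
    exact (Zdef_eq ψ hN).symm
  · intro p a b hab _
    set d : ℕ := p.natDegree with hd
    set M : ℕ := ⌈|a| + |b|⌉₊ + d + 1 with hM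
    have hceil : |a| + |b| ≤ (⌈|a| + |b|⌉₊ : ℝ) := Nat.le_ceil _
    have hMr : ((⌈|a| + |b|⌉₊ : ℕ) : ℝ) + (d:ℝ) + 1 = (M:ℝ) := by rw [hM]; push_cast; ring
    have haabs : -|a| ≤ a := neg_abs_le _
    have hbabs : b ≤ |b| := le_abs_self _
    have hMa : 1 ≤ a + (M:ℝ) := by
      rw [← hMr]; have := abs_nonneg b; have := Nat.cast_nonneg (α := ℝ) d; linarith
    have hbM : (1:ℝ) ≤ b + M := by linarith
    obtain ⟨B, hB0, hB⟩ := ubound (It M ψ) (b + M) hbM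
    set K : ℝ := max |a| |b| + 1 with hK
    have hK1 : (1:ℝ) ≤ K := by
      rw [hK]; have := (abs_nonneg a).trans (le_max_left |a| |b|); linarith
    set Cp : ℝ := (∑ i ∈ Finset.range (d+1), ‖p.coeff i‖) * K ^ d with hCp
    have hCp0 : 0 ≤ Cp := by
      apply mul_nonneg (Finset.sum_nonneg fun i _ => norm_nonneg _)
      positivity
    refine ⟨Cp * B, 1, one_pos, ?_⟩
    intro s hsa hsb him
    have him0 : (0:ℝ) < |s.im| := lt_of_lt_of_le one_pos him
    have hre_bound : |s.re| ≤ max |a| |b| := by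
      rw [abs_le]
      constructor
      · have h1 : -(max |a| |b|) ≤ -|a| := neg_le_neg (le_max_left _ _)
        linarith
      · have h1 : |b| ≤ max |a| |b| := le_max_right _ _
        linarith
    have hN : Nn s ≤ M := by
      have h2 : ⌈|s.re|⌉₊ ≤ ⌈|a| + |b|⌉₊ := by
        apply Nat.ceil_mono
        have h3 : max |a| |b| ≤ |a| + |b| :=
          max_le (le_add_of_nonneg_right (abs_nonneg _)) (le_add_of_nonneg_left (abs_nonneg _))
        linarith
      simp only [Nn, hM]; omega
    have hZ : Zdef ψ s = Ffam ψ M s := Zdef_eq ψ hN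
    -- lower bound on the product
    have hprod : |s.im| ^ M ≤ ‖∏ k ∈ Finset.range M, (s + (k:ℂ))‖ := by
      rw [norm_prod]
      calc |s.im| ^ M = ∏ _k ∈ Finset.range M, |s.im| := by
            rw [Finset.prod_const, Finset.card_range]
        _ ≤ ∏ k ∈ Finset.range M, ‖s + (k:ℂ)‖ := by
            refine Finset.prod_le_prod (fun _ _ => abs_nonneg _) (fun k _ => ?_)
            have h1 : |(s + (k:ℂ)).im| = |s.im| := by
              simp [Complex.add_im, Complex.natCast_im]
            rw [← h1]
            exact Complex.abs_im_le_norm _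
    -- mellin bound
    have hmell : ‖mellin (⇑(It M ψ)) (s + (M:ℂ))‖ ≤ B := by
      refine hB _ ?_ ?_
      · simp only [Complex.add_re, Complex.natCast_re]; linarith
      · simp only [Complex.add_re, Complex.natCast_re]; linarith
    have hZbound : ‖Zdef ψ s‖ ≤ B / |s.im| ^ M := by
      rw [hZ]
      have : ‖Ffam ψ M s‖
          = ‖mellin (⇑(It M ψ)) (s + (M:ℂ))‖ / ‖∏ k ∈ Finset.range M, (s + (k:ℂ))‖ := by
        rw [Ffam, norm_mul, norm_inv, norm_mul, norm_pow, norm_neg, norm_one, one_pow, one_mul,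
          inv_mul_eq_div]
      rw [this]
      exact div_le_div₀ hB0 hmell (pow_pos him0 M) hprod
    have hs_norm : ‖s‖ ≤ K * |s.im| := by
      have h1 : ‖s‖ ≤ |s.re| + |s.im| := Complex.norm_le_abs_re_add_abs_im s
      have h2 : max |a| |b| ≤ max |a| |b| * |s.im| :=
        le_mul_of_one_le_right ((abs_nonneg a).trans (le_max_left _ _)) him
      have h3 : (max |a| |b| + 1) * |s.im| = max |a| |b| * |s.im| + |s.im| := by ring
      rw [hK, h3]
      linarith
    have hK_im : (1:ℝ) ≤ K * |s.im| :=
      him.trans (le_mul_of_one_le_left (abs_nonneg _) hK1)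
    have hpoly : ‖p.eval s‖ ≤ Cp * |s.im| ^ d := by
      rw [Polynomial.eval_eq_sum_range]
      refine (norm_sum_le _ _).trans ?_
      have hterm : ∀ i ∈ Finset.range (d+1),
          ‖p.coeff i * s ^ i‖ ≤ ‖p.coeff i‖ * (K * |s.im|) ^ d := by
        intro i hi
        rw [norm_mul, norm_pow]
        refine mul_le_mul_of_nonneg_left ?_ (norm_nonneg _)
        calc ‖s‖ ^ i ≤ (K * |s.im|) ^ i :=
              pow_le_pow_left₀ (norm_nonneg _) hs_norm i
          _ ≤ (K * |s.im|) ^ d := by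
              apply pow_le_pow_right₀ hK_im
              have := Finset.mem_range.mp hi; omega
      refine (Finset.sum_le_sum hterm).trans (le_of_eq ?_)
      rw [← Finset.sum_mul, hCp, mul_pow]
      ring
    have hdM : |s.im| ^ d ≤ |s.im| ^ M := by
      apply pow_le_pow_right₀ him
      rw [hM]; omega
    calc ‖p.eval s * Zdef ψ s‖ = ‖p.eval s‖ * ‖Zdef ψ s‖ := norm_mul _ _
      _ ≤ (Cp * |s.im| ^ d) * (B / |s.im| ^ M) := by
          exact mul_le_mul hpoly hZbound (norm_nonneg _)
            (mul_nonneg hCp0 (pow_nonneg (abs_nonneg _) d))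
      _ ≤ Cp * B := by
          rw [mul_assoc]
          refine mul_le_mul_of_nonneg_left ?_ hCp0
          rw [mul_div_assoc', div_le_iff₀ (pow_pos him0 M)]
          nlinarith [hB0, hdM, pow_nonneg (abs_nonneg s.im) d]
end
end

section
/- Let F = ℝ, G = GL_{2n}(ℝ). Define θ on G by θ(g) = (gᵗ)^{-1} and let w = [[0, Id_n],[-Id_n, 0]]. If λ : V → ℂ satisfies the Shalika equivariance λ(π([[g,A],[0,g]])v) = exp(2πi·Tr(g^{-1}A))·λ(v) for the representation π, then λ^θ defined by λ^θ(v) := λ(π(w)v) satisfies the Shalika equivariance for the representation π^θ given by π^θ(g) := π(θ(g)): that is, λ^θ(π^θ([[g,A],[0,g]])v) = exp(2πi·Tr(g^{-1}A))·λ^θ(v) for all g ∈ GL_n(ℝ), A ∈ Mat(n×n,ℝ), v ∈ V. -/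
open scoped Matrix
open Complex

/-- Let `G = GL_{2n}(ℝ)` (matrices indexed by `Fin n ⊕ Fin n`), `θ(g) = (gᵀ)⁻¹` and
`w = [[0, Id],[-Id, 0]]`. If `λ` satisfies the Shalika equivariance
`λ(π([[g,A],[0,g]])v) = exp(2πi·Tr(g⁻¹A))·λ(v)` for the representation `π`, then
`λ^θ(v) := λ(π(w)v)` satisfies the Shalika equivariance for `π^θ(g) := π(θ(g))`:
`λ^θ(π^θ([[g,A],[0,g]])v) = exp(2πi·Tr(g⁻¹A))·λ^θ(v)`. -/
theorem stmt12 (n : ℕ) {V : Type*} [AddCommGroup V] [Module ℂ V]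
    (π : Matrix (Fin n ⊕ Fin n) (Fin n ⊕ Fin n) ℝ → (V →ₗ[ℂ] V))
    (hπ : ∀ a b : Matrix (Fin n ⊕ Fin n) (Fin n ⊕ Fin n) ℝ,
      IsUnit a.det → IsUnit b.det → π (a * b) = π a * π b)
    (lam : V →ₗ[ℂ] ℂ)
    (heq : ∀ (g A : Matrix (Fin n) (Fin n) ℝ), IsUnit g.det → ∀ v : V,
      lam (π (Matrix.fromBlocks g A 0 g) v) =
        Complex.exp (2 * Real.pi * Complex.I * ((g⁻¹ * A).trace : ℝ)) * lam v) :
    ∀ (g A : Matrix (Fin n) (Fin n) ℝ), IsUnit g.det → ∀ v : V,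
      lam (π (Matrix.fromBlocks 0 1 (-1) 0)
          (π (((Matrix.fromBlocks g A 0 g)ᵀ)⁻¹) v)) =
        Complex.exp (2 * Real.pi * Complex.I * ((g⁻¹ * A).trace : ℝ)) *
          lam (π (Matrix.fromBlocks 0 1 (-1) 0) v) := by
  intro g A hg v
  have hgT : IsUnit (gᵀ).det := by rwa [Matrix.det_transpose]
  set h : Matrix (Fin n) (Fin n) ℝ := (gᵀ)⁻¹ with hh
  have hgh : gᵀ * h = 1 := Matrix.mul_nonsing_inv _ hgT
  have hhg : h * gᵀ = 1 := Matrix.nonsing_inv_mul _ hgT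
  have hhdet : IsUnit h.det := by
    exact IsUnit.of_mul_eq_one _ (by rw [← Matrix.det_mul, hhg, Matrix.det_one])
  set w : Matrix (Fin n ⊕ Fin n) (Fin n ⊕ Fin n) ℝ := Matrix.fromBlocks 0 1 (-1) 0 with hw
  set S : Matrix (Fin n ⊕ Fin n) (Fin n ⊕ Fin n) ℝ := Matrix.fromBlocks g A 0 g with hS
  set S' : Matrix (Fin n ⊕ Fin n) (Fin n ⊕ Fin n) ℝ :=
    Matrix.fromBlocks h (h * Aᵀ * h) 0 h with hS'
  have hSdet : IsUnit S.det := by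
    rw [hS, Matrix.det_fromBlocks_zero₂₁]; exact hg.mul hg
  have hS'det : IsUnit S'.det := by
    rw [hS', Matrix.det_fromBlocks_zero₂₁]; exact hhdet.mul hhdet
  have hwdet : IsUnit w.det := by
    apply IsUnit.of_mul_eq_one (a := w.det) w.det
    rw [← Matrix.det_mul, hw, Matrix.fromBlocks_multiply]
    simp only [Matrix.det_fromBlocks_zero₂₁, Matrix.zero_mul, Matrix.mul_zero,
      Matrix.one_mul, Matrix.mul_one, Matrix.mul_neg, zero_add, add_zero,
      Matrix.neg_mul, neg_zero]
    rw [← Matrix.det_mul, neg_mul_neg, one_mul, Matrix.det_one]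
  have hSTinv : (Sᵀ)⁻¹ = Matrix.fromBlocks h 0 (-(h * Aᵀ * h)) h := by
    apply Matrix.inv_eq_right_inv
    rw [hS, Matrix.fromBlocks_transpose, Matrix.fromBlocks_multiply]
    have h21 : Aᵀ * h + -(gᵀ * (h * Aᵀ * h)) = 0 := by
      rw [← Matrix.mul_assoc, ← Matrix.mul_assoc, hgh, Matrix.one_mul]
      exact add_neg_cancel _
    simp only [Matrix.mul_zero, Matrix.zero_mul, Matrix.mul_neg, zero_add, add_zero,
      hgh, h21, Matrix.transpose_zero, neg_zero]
    exact Matrix.fromBlocks_one (l := Fin n) (m := Fin n) (α := ℝ)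
  have hSTdet : IsUnit ((Sᵀ)⁻¹).det := by
    rw [hSTinv, Matrix.det_fromBlocks_zero₁₂]; exact hhdet.mul hhdet
  have hkey : w * (Sᵀ)⁻¹ = S' * w := by
    rw [hSTinv, hw, hS', Matrix.fromBlocks_multiply, Matrix.fromBlocks_multiply]
    simp
  have hinvh : h⁻¹ = gᵀ := by
    rw [hh, Matrix.nonsing_inv_nonsing_inv _ hgT]
  have htr : (h⁻¹ * (h * Aᵀ * h)).trace = (g⁻¹ * A).trace := by
    rw [hinvh, ← Matrix.mul_assoc, ← Matrix.mul_assoc, hgh, Matrix.one_mul,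
      hh, ← Matrix.transpose_nonsing_inv, ← Matrix.transpose_mul,
      Matrix.trace_transpose]
  calc lam (π w (π ((Sᵀ)⁻¹) v)) = lam (π (w * (Sᵀ)⁻¹) v) := by
        rw [hπ w _ hwdet hSTdet]; rfl
    _ = lam (π S' (π w v)) := by rw [hkey, hπ S' w hS'det hwdet]; rfl
    _ = Complex.exp (2 * Real.pi * Complex.I * ((g⁻¹ * A).trace : ℝ)) * lam (π w v) := by
        rw [heq h (h * Aᵀ * h) hhdet (π w v), htr]
end

section
/- Suppose λ is a continuous functional on a smooth Fréchet representation (π,V) of GL_{2n}(ℝ) such that there exist M > 0 and a continuous seminorm β with |λ(π(ν(h))v)| ≤ |det h|^{-M}·β(v) for all h ∈ GL_n(ℝ), where ν(h) = diag(h, Id_n), and λ(π(u)v) = Ψ(u)λ(v) for u ∈ U (block unipotent) with |Ψ(u)| = 1. Then there is a continuous seminorm γ on V such that for every g ∈ GL_{2n}(ℝ) written in Iwasawa form g = u·diag(a,b)·k with a,b ∈ GL_n(ℝ), u ∈ U, k ∈ O(2n), one has |λ(π(g)v)| ≤ |det(b^{-1}a)|^{-M}·γ(v). -/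
open scoped Matrix

/-- The orthogonal group is a compact subset of matrix space. -/
lemma orthCompact (m : Type*) [Fintype m] [DecidableEq m] :
    IsCompact {k : Matrix m m ℝ | k ∈ Matrix.orthogonalGroup m ℝ} := by
  have hclosed : IsClosed {k : Matrix m m ℝ | k ∈ Matrix.orthogonalGroup m ℝ} := by
    have hcont : Continuous fun k : Matrix m m ℝ => k * star k := by
      refine continuous_matrix fun i j => ?_
      simp only [Matrix.mul_apply]
      exact continuous_finset_sum _ fun l _ =>
        (show Continuous fun k : Matrix m m ℝ => k i l from (continuous_apply l).comp (continuous_apply i)).mul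
          (show Continuous fun k : Matrix m m ℝ => (star k) l j by simp only [Matrix.star_apply, star_trivial]; exact (continuous_apply l).comp (continuous_apply j))
    have : {k : Matrix m m ℝ | k ∈ Matrix.orthogonalGroup m ℝ}
        = (fun k : Matrix m m ℝ => k * star k) ⁻¹' {1} := by
      ext k
      simp [Matrix.mem_unitaryGroup_iff, Matrix.orthogonalGroup]
    rw [this]
    exact isClosed_singleton.preimage hcont
  have hsub : {k : Matrix m m ℝ | k ∈ Matrix.orthogonalGroup m ℝ} ⊆
      Set.pi Set.univ fun _ : m => Set.pi Set.univ fun _ : m => Set.Icc (-1 : ℝ) 1 := by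
    intro k hk i _ j _
    have h1 : k * star k = 1 := Matrix.mem_unitaryGroup_iff.mp hk
    have hsum : ∑ l, k i l * k i l = 1 := by
      have := congrFun (congrFun h1 i) i
      simpa [Matrix.mul_apply, Matrix.one_apply] using this
    have hle : k i j * k i j ≤ 1 := by
      rw [← hsum]
      exact Finset.single_le_sum (fun l _ => mul_self_nonneg (k i l)) (Finset.mem_univ j)
    have := abs_le_one_iff_mul_self_le_one.mpr hle
    exact Set.mem_Icc.mpr (abs_le.mp this)
  exact (isCompact_univ_pi fun _ => isCompact_univ_pi fun _ => isCompact_Icc).of_isClosed_subset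
    hclosed hsub

/-- Suppose `λ` is a continuous functional on a smooth Fréchet representation `(π,V)` of
`GL_{2n}(ℝ)` (matrices indexed by `Fin n ⊕ Fin n`) such that for some `M > 0` and a
continuous seminorm `β`, `|λ(π(ν(h))v)| ≤ |det h|^{-M}·β(v)` for all `h ∈ GL_n(ℝ)`
(`ν(h) = diag(h, Id)`), `λ(π(u)v) = Ψ(u)λ(v)` for `u ∈ U` with `|Ψ(u)| = 1`, and `λ` is
invariant under `H = {diag(c,c)}` (on which `Ψ` is trivial). Then there is a continuous
seminorm `γ` with `|λ(π(g)v)| ≤ |det(b⁻¹a)|^{-M}·γ(v)` for every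
`g = u·diag(a,b)·k` in Iwasawa form (`u ∈ U`, `a,b ∈ GL_n(ℝ)`, `k ∈ O(2n)`). -/
theorem stmt16 (n : ℕ) {V : Type*} [AddCommGroup V] [Module ℂ V] [TopologicalSpace V]
    [IsTopologicalAddGroup V] [ContinuousSMul ℂ V]
    (π : Matrix (Fin n ⊕ Fin n) (Fin n ⊕ Fin n) ℝ → (V →ₗ[ℂ] V))
    (hπ : ∀ a b : Matrix (Fin n ⊕ Fin n) (Fin n ⊕ Fin n) ℝ,
      IsUnit a.det → IsUnit b.det → π (a * b) = π a * π b)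
    (hπK : Continuous fun p :
        {k : Matrix (Fin n ⊕ Fin n) (Fin n ⊕ Fin n) ℝ //
          k ∈ Matrix.orthogonalGroup (Fin n ⊕ Fin n) ℝ} × V => π p.1.val p.2)
    (lam : V →ₗ[ℂ] ℂ) (hlam : Continuous lam)
    (M : ℝ) (hM : 0 < M) (β : Seminorm ℂ V) (hβ : Continuous β)
    (hbound : ∀ h : Matrix (Fin n) (Fin n) ℝ, IsUnit h.det → ∀ v : V,
      ‖lam (π (Matrix.fromBlocks h 0 0 1) v)‖ ≤ |h.det| ^ (-M) * β v)
    (Ψ : Matrix (Fin n) (Fin n) ℝ → ℂ) (hΨ : ∀ A, ‖Ψ A‖ = 1)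
    (hU : ∀ (A : Matrix (Fin n) (Fin n) ℝ) (v : V),
      lam (π (Matrix.fromBlocks 1 A 0 1) v) = Ψ A * lam v)
    (hH : ∀ c : Matrix (Fin n) (Fin n) ℝ, IsUnit c.det → ∀ v : V,
      lam (π (Matrix.fromBlocks c 0 0 c) v) = lam v) :
    ∃ γ : Seminorm ℂ V, Continuous γ ∧
      ∀ (A : Matrix (Fin n) (Fin n) ℝ) (a b : Matrix (Fin n) (Fin n) ℝ),
        IsUnit a.det → IsUnit b.det →
        ∀ k ∈ Matrix.orthogonalGroup (Fin n ⊕ Fin n) ℝ, ∀ v : V,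
          ‖lam (π (Matrix.fromBlocks 1 A 0 1 * Matrix.fromBlocks a 0 0 b * k) v)‖ ≤
            |(b⁻¹ * a).det| ^ (-M) * γ v := by
  classical
  set K := {k : Matrix (Fin n ⊕ Fin n) (Fin n ⊕ Fin n) ℝ //
    k ∈ Matrix.orthogonalGroup (Fin n ⊕ Fin n) ℝ} with hKdef
  haveI : CompactSpace K := isCompact_iff_compactSpace.mp (orthCompact _)
  haveI : Nonempty K := ⟨⟨1, one_mem _⟩⟩
  -- continuity of k ↦ π k v for fixed v
  have hcontk : ∀ v : V, Continuous fun k : K => π k.val v := fun v =>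
    hπK.comp (continuous_id.prodMk continuous_const)
  -- family of seminorms
  set p : K → Seminorm ℂ V := fun k => β.comp (π k.val) with hpdef
  have hbdd : BddAbove (Set.range p) := by
    rw [Seminorm.bddAbove_range_iff]
    intro v
    exact (isCompact_range ((hβ.comp (hcontk v)))).bddAbove
  set γ : Seminorm ℂ V := ⨆ k, p k with hγdef
  have hγapp : ∀ v, γ v = ⨆ k : K, β (π k.val v) := fun v => Seminorm.iSup_apply hbdd
  have hble : ∀ (k : K) (v : V), β (π k.val v) ≤ γ v := by
    intro k v
    rw [hγapp]
    exact le_ciSup (Seminorm.bddAbove_range_iff.mp hbdd v) k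
  -- continuity of γ
  have hγcont : Continuous γ := by
    refine Seminorm.continuous_of_continuousAt_zero (Seminorm.continuousAt_zero_of_forall' ?_)
    intro r hr
    have hF : Continuous fun q : K × V => β (π q.1.val q.2) := hβ.comp hπK
    have hopen : IsOpen {q : K × V | β (π q.1.val q.2) < r} := isOpen_lt hF continuous_const
    have hsub : (Set.univ : Set K) ×ˢ ({0} : Set V) ⊆ {q : K × V | β (π q.1.val q.2) < r} := by
      rintro ⟨k, v⟩ ⟨-, hv⟩
      simp only [Set.mem_singleton_iff] at hv
      subst hv
      simpa using hr
    obtain ⟨u, w, hu, hw, hsu, h0w, huw⟩ :=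
      generalized_tube_lemma isCompact_univ isCompact_singleton hopen hsub
    refine Filter.mem_of_superset (hw.mem_nhds (h0w rfl)) ?_
    intro v hv
    have : γ v ≤ r := by
      rw [hγapp]
      exact ciSup_le fun k => le_of_lt (huw (Set.mk_mem_prod (hsu (Set.mem_univ k)) hv) : _)
    simpa [Seminorm.mem_closedBall, sub_zero] using this
  refine ⟨γ, hγcont, ?_⟩
  intro A a b ha hb k hk v
  -- determinant facts
  have hadet := ha
  have hu : IsUnit (Matrix.fromBlocks (1 : Matrix (Fin n) (Fin n) ℝ) A 0 1).det := by
    rw [Matrix.det_fromBlocks_zero₂₁]; simp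
  have hd : IsUnit (Matrix.fromBlocks a (0 : Matrix (Fin n) (Fin n) ℝ) 0 b).det := by
    rw [Matrix.det_fromBlocks_zero₂₁]; exact ha.mul hb
  have hkunit : IsUnit (k.det) := by
    rw [← Matrix.isUnit_iff_isUnit_det]
    exact ⟨Unitary.toUnits ⟨k, hk⟩, rfl⟩
  have hbinv : IsUnit ((b⁻¹ : Matrix (Fin n) (Fin n) ℝ).det) := by
    refine IsUnit.of_mul_eq_one b.det ?_
    rw [← Matrix.det_mul, Matrix.nonsing_inv_mul b hb, Matrix.det_one]
  have hba : IsUnit ((b⁻¹ * a).det) := by rw [Matrix.det_mul]; exact hbinv.mul ha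
  have hν : IsUnit (Matrix.fromBlocks (b⁻¹ * a) (0 : Matrix (Fin n) (Fin n) ℝ) 0 1).det := by
    rw [Matrix.det_fromBlocks_zero₂₁]; simpa using hba
  have hbb : IsUnit (Matrix.fromBlocks b (0 : Matrix (Fin n) (Fin n) ℝ) 0 b).det := by
    rw [Matrix.det_fromBlocks_zero₂₁]; exact hb.mul hb
  -- decompose the diagonal part
  have hdecomp : Matrix.fromBlocks a (0 : Matrix (Fin n) (Fin n) ℝ) 0 b
      = Matrix.fromBlocks b 0 0 b * Matrix.fromBlocks (b⁻¹ * a) 0 0 1 := by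
    rw [Matrix.fromBlocks_multiply]
    congr 1 <;> simp [← Matrix.mul_assoc, Matrix.mul_nonsing_inv b hb]
  -- expand π
  have hπsplit : π (Matrix.fromBlocks 1 A 0 1 * Matrix.fromBlocks a 0 0 b * k)
      = π (Matrix.fromBlocks 1 A 0 1) * (π (Matrix.fromBlocks b 0 0 b) *
          (π (Matrix.fromBlocks (b⁻¹ * a) 0 0 1) * π k)) := by
    rw [hπ _ _ (by rw [Matrix.det_mul]; exact hu.mul hd) hkunit,
      hπ _ _ hu hd, hdecomp, hπ _ _ hbb hν, mul_assoc, mul_assoc]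
  set w := π k v with hwdef
  have key : ‖lam (π (Matrix.fromBlocks 1 A 0 1 * Matrix.fromBlocks a 0 0 b * k) v)‖
      = ‖lam (π (Matrix.fromBlocks (b⁻¹ * a) 0 0 1) w)‖ := by
    rw [hπsplit]
    simp only [Module.End.mul_apply]
    rw [hU, hH b hb, norm_mul, hΨ, one_mul]
  rw [key]
  calc ‖lam (π (Matrix.fromBlocks (b⁻¹ * a) 0 0 1) w)‖
      ≤ |(b⁻¹ * a).det| ^ (-M) * β w := hbound _ hba w
    _ ≤ |(b⁻¹ * a).det| ^ (-M) * γ v := by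
        refine mul_le_mul_of_nonneg_left ?_ (Real.rpow_nonneg (abs_nonneg _) _)
        exact hble ⟨k, hk⟩ v
end

section
/- Let Φ ∈ 𝒮(Mat(2n×2n,ℝ)), M ∈ ℝ, and suppose f : GL_{2n}(ℝ) → ℂ is measurable with |f(g)| ≤ |det(b^{-1}a)|^{-M} for g = u·diag(a,b)·k in Iwasawa coordinates (u ∈ U block-unipotent, a,b ∈ GL_n(ℝ), k ∈ O(2n)). Then there exists s₀ ∈ ℝ such that for all s ∈ ℂ with Re(s) > s₀, the integral ∫_{GL_{2n}(ℝ)} |f(g)·Φ(g)|·|det g|^{Re(s)+n-1/2} d^×g is finite, where d^×g is Haar measure. -/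
open MeasureTheory
open scoped Matrix

open Matrix
open scoped RealInnerProductSpace

-- Step A: orthonormal family construction
lemma ortho_decomp (n : ℕ) (X : Matrix (Fin n ⊕ Fin n) (Fin n ⊕ Fin n) ℝ)
    (hX : IsUnit X.det) :
    ∃ k : Matrix (Fin n ⊕ Fin n) (Fin n ⊕ Fin n) ℝ,
      k ∈ Matrix.orthogonalGroup (Fin n ⊕ Fin n) ℝ ∧
      ∀ i j, (X * kᵀ) (Sum.inr i) (Sum.inl j) = 0 := by
  classical
  set E := EuclideanSpace ℝ (Fin n ⊕ Fin n)
  let e := (WithLp.linearEquiv 2 ℝ ((Fin n ⊕ Fin n) → ℝ)).symm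
  let r : (Fin n ⊕ Fin n) → E := fun i => e (X i)
  have hli : LinearIndependent ℝ r := by
    have h1 : LinearIndependent ℝ (fun i => X i) :=
      Matrix.linearIndependent_rows_iff_isUnit.mpr ((Matrix.isUnit_iff_isUnit_det X).mpr hX)
    exact h1.map' e.toLinearMap e.ker
  set V : Submodule ℝ E := Submodule.span ℝ (Set.range (fun i : Fin n => r (Sum.inr i))) with hV
  have hliV : LinearIndependent ℝ (fun i : Fin n => r (Sum.inr i)) :=
    hli.comp Sum.inr Sum.inr_injective
  have hdimV : Module.finrank ℝ V = n := by
    rw [hV, finrank_span_eq_card hliV, Fintype.card_fin]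
  have hdimE : Module.finrank ℝ E = n + n := by
    simp [E, Fintype.card_sum]
  have hdimVp : Module.finrank ℝ (Vᗮ) = n := by
    have := Submodule.finrank_add_finrank_orthogonal (K := V)
    omega
  let bV : OrthonormalBasis (Fin n) ℝ V :=
    (stdOrthonormalBasis ℝ V).reindex (finCongr hdimV)
  let bVp : OrthonormalBasis (Fin n) ℝ (Vᗮ : Submodule ℝ E) :=
    (stdOrthonormalBasis ℝ (Vᗮ : Submodule ℝ E)).reindex (finCongr hdimVp)
  let v : (Fin n ⊕ Fin n) → E := Sum.elim (fun i => (bVp i : E)) (fun i => (bV i : E))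
  have hvV : ∀ i, v (Sum.inr i) ∈ V := fun i => (bV i).2
  have hvVp : ∀ i, v (Sum.inl i) ∈ Vᗮ := fun i => (bVp i).2
  have hon : Orthonormal ℝ v := by
    rw [orthonormal_iff_ite]
    intro i j
    rcases i with i | i <;> rcases j with j | j
    · have := orthonormal_iff_ite.mp bVp.orthonormal i j
      simpa [v, Submodule.coe_inner] using this
    · rw [if_neg (by simp)]
      exact Submodule.inner_left_of_mem_orthogonal (bV j).2 (bVp i).2
    · rw [if_neg (by simp)]
      exact Submodule.inner_right_of_mem_orthogonal (bV i).2 (bVp j).2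
    · have := orthonormal_iff_ite.mp bV.orthonormal i j
      simpa [v, Submodule.coe_inner] using this
  refine ⟨Matrix.of (fun i j => v i j), ?_, ?_⟩
  · rw [Matrix.mem_orthogonalGroup_iff]
    ext i j
    have := orthonormal_iff_ite.mp hon i j
    rw [PiLp.inner_apply] at this
    simp only [RCLike.inner_apply, starRingEnd_apply, star_trivial] at this
    simp only [Matrix.mul_apply, Matrix.star_apply, Matrix.one_apply, Matrix.of_apply,
      star_trivial]
    rw [← this]
    exact Finset.sum_congr rfl fun _ _ => mul_comm _ _
  · intro i j
    have hmem : r (Sum.inr i) ∈ V := Submodule.subset_span ⟨i, rfl⟩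
    have h0 : ⟪r (Sum.inr i), v (Sum.inl j)⟫ = 0 :=
      Submodule.inner_right_of_mem_orthogonal hmem (hvVp j)
    rw [PiLp.inner_apply] at h0
    simp only [RCLike.inner_apply, starRingEnd_apply, star_trivial] at h0
    simp only [Matrix.mul_apply, Matrix.transpose_apply, Matrix.of_apply]
    rw [← h0]
    exact Finset.sum_congr rfl fun _ _ => mul_comm _ _

lemma iwasawa_exists (n : ℕ) (X : Matrix (Fin n ⊕ Fin n) (Fin n ⊕ Fin n) ℝ)
    (hX : X.det ≠ 0) (C : ℝ) (hC : ∀ i j, |X i j| ≤ C) :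
    ∃ (a b A : Matrix (Fin n) (Fin n) ℝ) (k : Matrix (Fin n ⊕ Fin n) (Fin n ⊕ Fin n) ℝ),
      IsUnit a.det ∧ IsUnit b.det ∧ k ∈ Matrix.orthogonalGroup (Fin n ⊕ Fin n) ℝ ∧
      X = fromBlocks 1 A 0 1 * fromBlocks a 0 0 b * k ∧
      |X.det| = |a.det| * |b.det| ∧
      (∀ i j, |a i j| ≤ 2 * n * C) ∧ (∀ i j, |b i j| ≤ 2 * n * C) := by
  obtain ⟨k, hk, hk0⟩ := ortho_decomp n X (isUnit_iff_ne_zero.mpr hX)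
  have hstar : star k = kᵀ := by
    ext i j; simp [Matrix.star_apply]
  have hkk : k * kᵀ = 1 := by
    rw [← hstar]; exact (Matrix.mem_orthogonalGroup_iff _ _).mp hk
  have hkk' : kᵀ * k = 1 := mul_eq_one_comm.mp hkk
  set T := X * kᵀ with hT
  have hXT : X = T * k := by
    rw [hT, Matrix.mul_assoc, hkk', Matrix.mul_one]
  set a := T.toBlocks₁₁ with ha
  set b := T.toBlocks₂₂ with hb
  set c := T.toBlocks₁₂ with hc
  have hT21 : T.toBlocks₂₁ = 0 := by
    ext i j; exact hk0 i j
  have hTblocks : T = fromBlocks a c 0 b := by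
    rw [ha, hc, hb, ← hT21]; exact (Matrix.fromBlocks_toBlocks T).symm
  have hdetk : k.det * k.det = 1 := by
    have := congrArg Matrix.det hkk
    rwa [Matrix.det_mul, Matrix.det_transpose, Matrix.det_one] at this
  have habsk : |k.det| = 1 := by
    rcases mul_self_eq_one_iff.mp hdetk with h | h <;> simp [h]
  have hdetT : T.det = a.det * b.det := by
    rw [hTblocks, Matrix.det_fromBlocks_zero₂₁]
  have hdetX : |X.det| = |a.det| * |b.det| := by
    rw [hXT, Matrix.det_mul, abs_mul, hdetT, habsk, mul_one, abs_mul]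
  have hTdet_ne : a.det * b.det ≠ 0 := by
    intro h
    apply hX
    have : |X.det| = 0 := by rw [hdetX, ← abs_mul, h, abs_zero]
    exact abs_eq_zero.mp this
  have hadet : IsUnit a.det := isUnit_iff_ne_zero.mpr (left_ne_zero_of_mul hTdet_ne)
  have hbdet : IsUnit b.det := isUnit_iff_ne_zero.mpr (right_ne_zero_of_mul hTdet_ne)
  -- entry bound on k
  have hkabs : ∀ i j, |k i j| ≤ 1 := by
    intro i j
    have hdiag : ∑ l, k i l * k i l = 1 := by
      have := congrFun (congrFun hkk i) i
      simpa [Matrix.mul_apply, Matrix.one_apply] using this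
    have hsq : k i j * k i j ≤ 1 := by
      rw [← hdiag]
      exact Finset.single_le_sum (fun l _ => mul_self_nonneg (k i l)) (Finset.mem_univ j)
    nlinarith [abs_nonneg (k i j), sq_abs (k i j), abs_le_one_iff_mul_self_le_one.mpr hsq]
  have hCnn : ∀ (i l : Fin n ⊕ Fin n), (0:ℝ) ≤ C := fun i l => le_trans (abs_nonneg _) (hC i l)
  have hTabs : ∀ i j, |T i j| ≤ 2 * n * C := by
    intro i j
    calc |T i j| = |∑ l, X i l * k j l| := by
            simp [hT, Matrix.mul_apply, Matrix.transpose_apply]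
      _ ≤ ∑ l, |X i l * k j l| := Finset.abs_sum_le_sum_abs _ _
      _ ≤ ∑ _l : Fin n ⊕ Fin n, C := by
            refine Finset.sum_le_sum fun l _ => ?_
            rw [abs_mul]
            calc |X i l| * |k j l| ≤ C * 1 :=
                  mul_le_mul (hC i l) (hkabs j l) (abs_nonneg _) (hCnn i l)
              _ = C := mul_one C
      _ = 2 * n * C := by
            rw [Finset.sum_const, Finset.card_univ, Fintype.card_sum, Fintype.card_fin,
              nsmul_eq_mul]
            push_cast; ring
  refine ⟨a, b, c * b⁻¹, k, hadet, hbdet, hk, ?_, hdetX, fun i j => hTabs _ _, fun i j => hTabs _ _⟩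
  have : fromBlocks (1 : Matrix (Fin n) (Fin n) ℝ) (c * b⁻¹) 0 1 * fromBlocks a 0 0 b
      = fromBlocks a c 0 b := by
    rw [Matrix.fromBlocks_multiply]
    congr 1 <;> simp [Matrix.nonsing_inv_mul_cancel_right _ _ hbdet]
  rw [this, ← hTblocks, ← hXT]


set_option maxHeartbeats 1000000 in
lemma f_bound (n : ℕ) (M : ℝ)
    (f : ((Fin n ⊕ Fin n) → (Fin n ⊕ Fin n) → ℝ) → ℂ)
    (hbd : ∀ (A : Matrix (Fin n) (Fin n) ℝ) (a b : Matrix (Fin n) (Fin n) ℝ),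
      IsUnit a.det → IsUnit b.det →
      ∀ k : Matrix (Fin n ⊕ Fin n) (Fin n ⊕ Fin n) ℝ,
        k ∈ Matrix.orthogonalGroup (Fin n ⊕ Fin n) ℝ →
        ‖f (fun i j => ((Matrix.fromBlocks 1 A 0 1 * Matrix.fromBlocks a 0 0 b * k :
            Matrix (Fin n ⊕ Fin n) (Fin n ⊕ Fin n) ℝ)) i j)‖ ≤
          |(b⁻¹ * a).det| ^ (-M))
    (X : (Fin n ⊕ Fin n) → (Fin n ⊕ Fin n) → ℝ) (hX : (Matrix.of X).det ≠ 0) :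
    ‖f X‖ ≤ (((n.factorial * (2*n)^n : ℝ))^2 * (1 + ‖X‖)^(2*n) / |(Matrix.of X).det|) ^ |M| := by
  set u : ℝ := 1 + ‖X‖ with hu
  have hu1 : (1:ℝ) ≤ u := by linarith [norm_nonneg X]
  have hu0 : (0:ℝ) ≤ u := by linarith
  have hent : ∀ i j, |(Matrix.of X) i j| ≤ u := by
    intro i j
    have h1 : ‖X i j‖ ≤ ‖X i‖ := norm_le_pi_norm (X i) j
    have h2 : ‖X i‖ ≤ ‖X‖ := norm_le_pi_norm X i
    have : |X i j| ≤ ‖X‖ := le_trans h1 h2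
    simpa [hu, Matrix.of_apply] using le_trans this (by linarith)
  obtain ⟨a, b, A, k, hadet, hbdet, hk, hdecomp, hdetX, haent, hbent⟩ :=
    iwasawa_exists n (Matrix.of X) hX u hent
  set c₁ : ℝ := (n.factorial * (2*n)^n : ℝ) with hc₁
  have hc₁0 : 0 ≤ c₁ := by positivity
  have habs_a : |a.det| ≤ c₁ * u^n := by
    have := Matrix.det_le (A := a) (abv := AbsoluteValue.abs) (x := 2 * n * u) haent
    simp only [Fintype.card_fin, nsmul_eq_mul] at this
    calc |a.det| ≤ n.factorial * (2 * n * u)^n := this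
      _ = c₁ * u^n := by rw [hc₁, mul_pow]; push_cast; ring
  have habs_b : |b.det| ≤ c₁ * u^n := by
    have := Matrix.det_le (A := b) (abv := AbsoluteValue.abs) (x := 2 * n * u) hbent
    simp only [Fintype.card_fin, nsmul_eq_mul] at this
    calc |b.det| ≤ n.factorial * (2 * n * u)^n := this
      _ = c₁ * u^n := by rw [hc₁, mul_pow]; push_cast; ring
  have hfX : ‖f X‖ ≤ |(b⁻¹ * a).det| ^ (-M) := by
    have h := hbd A a b hadet hbdet k hk
    have hXeq : (fun i j => ((Matrix.fromBlocks 1 A 0 1 * Matrix.fromBlocks a 0 0 b * k :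
        Matrix (Fin n ⊕ Fin n) (Fin n ⊕ Fin n) ℝ)) i j) = X := by
      funext i j
      exact (congrFun (congrFun hdecomp i) j).symm
    rwa [hXeq] at h
  set D : ℝ := |(Matrix.of X).det| with hD
  have hDpos : 0 < D := abs_pos.mpr hX
  have hapos : 0 < |a.det| := abs_pos.mpr hadet.ne_zero
  have hbpos : 0 < |b.det| := abs_pos.mpr hbdet.ne_zero
  set t : ℝ := |(b⁻¹ * a).det| with ht
  have htval : t = |a.det| / |b.det| := by
    rw [ht, Matrix.det_mul, Matrix.det_nonsing_inv, Ring.inverse_eq_inv, abs_mul, abs_inv]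
    rw [div_eq_inv_mul]
  set Q : ℝ := c₁^2 * u^(2*n) / D with hQ
  have hDval : D = |a.det| * |b.det| := hdetX
  have hnum : (c₁ * u^n) * (c₁ * u^n) = c₁^2 * u^(2*n) := by
    rw [two_mul, pow_add]; ring
  have htQ : t ≤ Q := by
    rw [htval, hQ, hDval, div_le_div_iff₀ hbpos (mul_pos hapos hbpos)]
    calc |a.det| * (|a.det| * |b.det|) = (|a.det| * |a.det|) * |b.det| := by ring
      _ ≤ ((c₁ * u^n) * (c₁ * u^n)) * |b.det| := by
          apply mul_le_mul_of_nonneg_right _ hbpos.le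
          exact mul_le_mul habs_a habs_a hapos.le (by positivity)
      _ = c₁^2 * u^(2*n) * |b.det| := by rw [hnum]
  have htQ' : t⁻¹ ≤ Q := by
    rw [htval, inv_div, hQ, hDval, div_le_div_iff₀ hapos (mul_pos hapos hbpos)]
    calc |b.det| * (|a.det| * |b.det|) = (|b.det| * |b.det|) * |a.det| := by ring
      _ ≤ ((c₁ * u^n) * (c₁ * u^n)) * |a.det| := by
          apply mul_le_mul_of_nonneg_right _ hapos.le
          exact mul_le_mul habs_b habs_b hbpos.le (by positivity)
      _ = c₁^2 * u^(2*n) * |a.det| := by rw [hnum]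
  have htpos : 0 < t := by rw [htval]; exact div_pos hapos hbpos
  refine le_trans hfX ?_
  rcases le_or_gt M 0 with hM | hM
  · have : -M = |M| := (abs_of_nonpos hM).symm
    rw [← this]
    exact Real.rpow_le_rpow htpos.le htQ (by rw [this]; exact abs_nonneg M)
  · have habsM : |M| = M := abs_of_pos hM
    rw [Real.rpow_neg htpos.le, ← Real.inv_rpow htpos.le, habsM]
    exact Real.rpow_le_rpow (by positivity) htQ' hM.le


set_option maxHeartbeats 1000000 in
/-- Let `Φ ∈ 𝒮(Mat(2n×2n,ℝ))` (matrices indexed by `Fin n ⊕ Fin n`), `M ∈ ℝ`, and let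
`f : GL_{2n}(ℝ) → ℂ` be measurable with `|f(g)| ≤ |det(b⁻¹a)|^{-M}` for
`g = u·diag(a,b)·k` in Iwasawa coordinates (`u ∈ U` block-unipotent, `a,b ∈ GL_n(ℝ)`,
`k ∈ O(2n)`). Then there is `s₀ ∈ ℝ` such that for all `s` with `Re(s) > s₀` the integral
`∫_{GL_{2n}(ℝ)} |f(g)Φ(g)|·|det g|^{Re(s)+n-1/2} d^×g` is finite, where the Haar measure
`d^×g` is `|det g|^{-2n}` times Lebesgue measure. -/
theorem stmt17 (n : ℕ) (M : ℝ)
    (Φ : SchwartzMap ((Fin n ⊕ Fin n) → (Fin n ⊕ Fin n) → ℝ) ℂ)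
    (f : ((Fin n ⊕ Fin n) → (Fin n ⊕ Fin n) → ℝ) → ℂ) (hf : Measurable f)
    (hbd : ∀ (A : Matrix (Fin n) (Fin n) ℝ) (a b : Matrix (Fin n) (Fin n) ℝ),
      IsUnit a.det → IsUnit b.det →
      ∀ k : Matrix (Fin n ⊕ Fin n) (Fin n ⊕ Fin n) ℝ,
        k ∈ Matrix.orthogonalGroup (Fin n ⊕ Fin n) ℝ →
        ‖f (fun i j => ((Matrix.fromBlocks 1 A 0 1 * Matrix.fromBlocks a 0 0 b * k :
            Matrix (Fin n ⊕ Fin n) (Fin n ⊕ Fin n) ℝ)) i j)‖ ≤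
          |(b⁻¹ * a).det| ^ (-M)) :
    ∃ s₀ : ℝ, ∀ s : ℂ, s₀ < s.re →
      (∫⁻ X in {X : (Fin n ⊕ Fin n) → (Fin n ⊕ Fin n) → ℝ | (Matrix.of X).det ≠ 0},
          ENNReal.ofReal
            (‖f X‖ * ‖Φ X‖ * |(Matrix.of X).det| ^ (s.re + n - 1 / 2) *
              (|(Matrix.of X).det| ^ (2 * n))⁻¹)) < ⊤ := by
  classical
  refine ⟨|M| + n + 1, fun s hs => ?_⟩
  set e' : ℝ := s.re - n - 1/2 - |M| with he'
  have he'pos : 0 < e' := by rw [he']; linarith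
  set c₁ : ℝ := (n.factorial * (2*n)^n : ℝ) with hc₁
  have hc₁0 : 0 ≤ c₁ := by positivity
  set c₂ : ℝ := ((n+n).factorial : ℝ) with hc₂
  have hc₂0 : 0 ≤ c₂ := by positivity
  set d : ℕ := Module.finrank ℝ ((Fin n ⊕ Fin n) → (Fin n ⊕ Fin n) → ℝ) with hd
  set p : ℝ := (2*n : ℝ) * |M| + (n+n : ℝ) * e' with hp
  set N : ℕ := ⌈p⌉₊ with hN
  set m : ℕ := N + (d+1) with hm
  set c₃ : ℝ := 2^m * (Finset.Iic (m,0)).sup (fun q => SchwartzMap.seminorm ℝ q.1 q.2) Φ with hc₃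
  set Ctot : ℝ := ((c₁^2)^|M| * c₂^e') * c₃ with hCtot
  set r : ℝ := ((d+1 : ℕ) : ℝ) with hr
  set bnd : ((Fin n ⊕ Fin n) → (Fin n ⊕ Fin n) → ℝ) → ℝ := fun X => Ctot * (1+‖X‖)^(-r) with hbnd
  have key : ∀ X : (Fin n ⊕ Fin n) → (Fin n ⊕ Fin n) → ℝ, (Matrix.of X).det ≠ 0 →
      ‖f X‖ * ‖Φ X‖ * |(Matrix.of X).det| ^ (s.re + n - 1/2) *
        (|(Matrix.of X).det| ^ (2*n))⁻¹ ≤ bnd X := by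
    intro X hX
    set D : ℝ := |(Matrix.of X).det| with hD
    have hDpos : 0 < D := abs_pos.mpr hX
    set u : ℝ := 1 + ‖X‖ with hu
    have hu1 : (1:ℝ) ≤ u := by simp [hu]
    have hu0 : (0:ℝ) < u := lt_of_lt_of_le one_pos hu1
    have h1 : ‖f X‖ ≤ (c₁^2 * u^(2*n) / D) ^ |M| := f_bound n M f hbd X hX
    have h2 : D ^ (s.re + (n:ℝ) - 1/2) * (D ^ (2*n))⁻¹ = D ^ (e' + |M|) := by
      rw [← Real.rpow_natCast D (2*n), ← Real.rpow_neg hDpos.le, ← Real.rpow_add hDpos]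
      congr 1
      rw [he']
      push_cast
      ring
    have h3 : (c₁^2 * u^(2*n) / D) ^ |M| * D ^ (e' + |M|)
        = (c₁^2 * u^(2*n)) ^ |M| * D ^ e' := by
      rw [Real.div_rpow (by positivity) hDpos.le, Real.rpow_add hDpos]
      have hne : D ^ |M| ≠ 0 := (Real.rpow_pos_of_pos hDpos _).ne'
      field_simp
    have hent : ∀ i j, |(Matrix.of X) i j| ≤ u := by
      intro i j
      have h1' : ‖X i j‖ ≤ ‖X i‖ := norm_le_pi_norm (X i) j
      have h2' : ‖X i‖ ≤ ‖X‖ := norm_le_pi_norm X i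
      have : |X i j| ≤ ‖X‖ := le_trans h1' h2'
      simp only [hu, Matrix.of_apply]
      linarith
    have h4 : D ≤ c₂ * u^(n+n) := by
      have := Matrix.det_le (A := Matrix.of X) (abv := AbsoluteValue.abs) (x := u) hent
      simp only [Fintype.card_sum, Fintype.card_fin, nsmul_eq_mul] at this
      exact this
    have h5 : D ^ e' ≤ c₂ ^ e' * (u^(n+n)) ^ e' := by
      rw [← Real.mul_rpow hc₂0 (by positivity)]
      exact Real.rpow_le_rpow hDpos.le h4 he'pos.le
    have h6 : (u^(2*n)) ^ |M| * (u^(n+n)) ^ e' = u ^ p := by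
      rw [← Real.rpow_natCast u (2*n), ← Real.rpow_natCast u (n+n),
        ← Real.rpow_mul hu0.le, ← Real.rpow_mul hu0.le, ← Real.rpow_add hu0, hp]
      push_cast
      ring_nf
    have h7 : u ^ p ≤ u ^ (N:ℝ) :=
      Real.rpow_le_rpow_of_exponent_le hu1 (Nat.le_ceil p)
    have h8 : u ^ m * ‖Φ X‖ ≤ c₃ := by
      simpa [norm_iteratedFDeriv_zero] using
        SchwartzMap.one_add_le_sup_seminorm_apply (𝕜 := ℝ) (m := (m,0)) le_rfl le_rfl Φ X
    have h9 : u ^ (N:ℝ) * ‖Φ X‖ ≤ c₃ * u ^ (-r) := by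
      rw [Real.rpow_natCast, Real.rpow_neg hu0.le, hr, Real.rpow_natCast]
      have hupow : (0:ℝ) < u ^ (d+1) := by positivity
      rw [← div_eq_mul_inv, le_div_iff₀ hupow]
      calc u ^ N * ‖Φ X‖ * u ^ (d+1) = u ^ m * ‖Φ X‖ := by rw [hm, pow_add]; ring
        _ ≤ c₃ := h8
    have hΦ0 : (0:ℝ) ≤ ‖Φ X‖ := norm_nonneg _
    calc ‖f X‖ * ‖Φ X‖ * D ^ (s.re + (n:ℝ) - 1/2) * (D ^ (2*n))⁻¹
        = ‖f X‖ * (D ^ (s.re + (n:ℝ) - 1/2) * (D ^ (2*n))⁻¹) * ‖Φ X‖ := by ring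
      _ = ‖f X‖ * D ^ (e' + |M|) * ‖Φ X‖ := by rw [h2]
      _ ≤ (c₁^2 * u^(2*n) / D) ^ |M| * D ^ (e' + |M|) * ‖Φ X‖ := by
          apply mul_le_mul_of_nonneg_right _ hΦ0
          exact mul_le_mul_of_nonneg_right h1 (Real.rpow_nonneg hDpos.le _)
      _ = (c₁^2 * u^(2*n)) ^ |M| * D ^ e' * ‖Φ X‖ := by rw [h3]
      _ ≤ (c₁^2 * u^(2*n)) ^ |M| * (c₂ ^ e' * (u^(n+n)) ^ e') * ‖Φ X‖ := by
          apply mul_le_mul_of_nonneg_right _ hΦ0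
          exact mul_le_mul_of_nonneg_left h5 (Real.rpow_nonneg (by positivity) _)
      _ = ((c₁^2)^|M| * c₂^e') * (((u^(2*n)) ^ |M| * (u^(n+n)) ^ e') * ‖Φ X‖) := by
          rw [Real.mul_rpow (by positivity) (by positivity)]
          ring
      _ = ((c₁^2)^|M| * c₂^e') * (u ^ p * ‖Φ X‖) := by rw [h6]
      _ ≤ ((c₁^2)^|M| * c₂^e') * (u ^ (N:ℝ) * ‖Φ X‖) := by
          apply mul_le_mul_of_nonneg_left _ (by positivity)
          exact mul_le_mul_of_nonneg_right h7 hΦ0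
      _ ≤ ((c₁^2)^|M| * c₂^e') * (c₃ * u ^ (-r)) := by
          apply mul_le_mul_of_nonneg_left h9 (by positivity)
      _ = bnd X := by rw [hbnd, hCtot, hu]; ring
  -- measurability of the set
  have hc : Continuous fun X : (Fin n ⊕ Fin n) → (Fin n ⊕ Fin n) → ℝ => (Matrix.of X).det := by
    exact Continuous.matrix_det continuous_id
  have hSmeas : MeasurableSet {X : (Fin n ⊕ Fin n) → (Fin n ⊕ Fin n) → ℝ | (Matrix.of X).det ≠ 0} :=
    hc.measurable (measurableSet_singleton (0:ℝ)).compl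
  -- integrability of the bound
  have hdr : ((Module.finrank ℝ ((Fin n ⊕ Fin n) → (Fin n ⊕ Fin n) → ℝ) : ℝ)) < r := by
    rw [hr, hd]; push_cast; linarith
  have hint : Integrable bnd := by
    exact (integrable_one_add_norm (μ := volume) hdr).const_mul Ctot
  calc (∫⁻ X in {X : (Fin n ⊕ Fin n) → (Fin n ⊕ Fin n) → ℝ | (Matrix.of X).det ≠ 0},
          ENNReal.ofReal
            (‖f X‖ * ‖Φ X‖ * |(Matrix.of X).det| ^ (s.re + n - 1 / 2) *
              (|(Matrix.of X).det| ^ (2 * n))⁻¹))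
      ≤ ∫⁻ X in {X : (Fin n ⊕ Fin n) → (Fin n ⊕ Fin n) → ℝ | (Matrix.of X).det ≠ 0}, ENNReal.ofReal (bnd X) :=
        setLIntegral_mono' hSmeas fun X hX => ENNReal.ofReal_le_ofReal (key X hX)
    _ ≤ ∫⁻ X : ((Fin n ⊕ Fin n) → (Fin n ⊕ Fin n) → ℝ), ENNReal.ofReal (bnd X) := setLIntegral_le_lintegral _ _
    _ ≤ ∫⁻ X : ((Fin n ⊕ Fin n) → (Fin n ⊕ Fin n) → ℝ), (‖bnd X‖₊ : ENNReal) := lintegral_mono fun X => Real.ofReal_le_enorm _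
    _ < ⊤ := hint.2
end

section
/- Multiplicativity of the finite part: let V be a Fréchet space, L : V → Hol(Ω) a linear map into holomorphic functions on a domain Ω ∋ 1/2, and suppose that for each polynomial p on ℂ there is a continuous linear operator D_p : V → V with L(D_p v)(s) = p(s)·L(v)(s) for all s. If there is a line Re(s) = c in Ω and for each p a continuous seminorm β_p with sup_{Re s = c} |p(s)·L(v)(s)| ≤ β_p(v), and similarly on a second line Re(s) = c' < 1/2 < c, and if for each fixed v the function p(s)L(v)(s) is bounded at infinity in the strip [c',c] + iℝ, then v ↦ L(v)(1/2) is a continuous linear functional on V. -/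
/-- Multiplicativity of the finite part: let `V` be a Fréchet space, `L : V → Hol(Ω)` a
linear map into holomorphic functions on an open domain `Ω ∋ 1/2` containing the closed
strip `c' ≤ Re(s) ≤ c` with `c' < 1/2 < c`. Suppose for each polynomial `p` there is a
continuous linear operator `D_p : V → V` with `L(D_p v)(s) = p(s)·L(v)(s)`, and for each
`p` continuous seminorms bounding `sup_{Re s = c} |p(s)L(v)(s)|` and
`sup_{Re s = c'} |p(s)L(v)(s)|`, and for each fixed `v` the function `p(s)L(v)(s)` is
bounded at infinity in the strip. Then `v ↦ L(v)(1/2)` is a continuous linear functional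
on `V`. -/
theorem stmt18 {V : Type*} [AddCommGroup V] [Module ℂ V] [TopologicalSpace V]
    [IsTopologicalAddGroup V] [ContinuousSMul ℂ V]
    (Ω : Set ℂ) (hΩ : IsOpen Ω) (c c' : ℝ) (hc' : c' < 1 / 2) (hc : 1 / 2 < c)
    (hstrip : {s : ℂ | c' ≤ s.re ∧ s.re ≤ c} ⊆ Ω)
    (L : V →ₗ[ℂ] (ℂ → ℂ))
    (hhol : ∀ v : V, DifferentiableOn ℂ (L v) Ω)
    (hD : ∀ p : Polynomial ℂ, ∃ D : V →ₗ[ℂ] V, Continuous D ∧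
      ∀ (v : V) (s : ℂ), L (D v) s = p.eval s * L v s)
    (hline : ∀ p : Polynomial ℂ, ∃ β : Seminorm ℂ V, Continuous β ∧
      ∀ (v : V) (s : ℂ), s.re = c → ‖p.eval s * L v s‖ ≤ β v)
    (hline' : ∀ p : Polynomial ℂ, ∃ β : Seminorm ℂ V, Continuous β ∧
      ∀ (v : V) (s : ℂ), s.re = c' → ‖p.eval s * L v s‖ ≤ β v)
    (hdecay : ∀ (v : V) (p : Polynomial ℂ), ∃ C Δ : ℝ, 0 < Δ ∧
      ∀ s : ℂ, c' ≤ s.re → s.re ≤ c → Δ ≤ |s.im| → ‖p.eval s * L v s‖ ≤ C) :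
    Continuous fun v : V => L v (1 / 2) := by
  obtain ⟨β, hβc, hβ⟩ := hline 1
  obtain ⟨β', hβ'c, hβ'⟩ := hline' 1
  have hre : ((1 / 2 : ℂ)).re = 1 / 2 := by norm_num
  have key : ∀ v : V, ‖L v (1 / 2 : ℂ)‖ ≤ β v + β' v := by
    intro v
    obtain ⟨C, Δ, hΔ, hC⟩ := hdecay v 1
    have hsub : closure (Complex.re ⁻¹' Set.Ioo c' c) ⊆ Ω := by
      have h1 : Complex.re ⁻¹' Set.Ioo c' c ⊆ {s : ℂ | c' ≤ s.re ∧ s.re ≤ c} :=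
        fun z hz => ⟨le_of_lt hz.1, le_of_lt hz.2⟩
      have h2 : IsClosed {s : ℂ | c' ≤ s.re ∧ s.re ≤ c} :=
        (isClosed_Icc (a := c') (b := c)).preimage Complex.continuous_re
      exact (closure_minimal h1 h2).trans hstrip
    have hd : DiffContOnCl ℂ (L v) (Complex.re ⁻¹' Set.Ioo c' c) :=
      ((hhol v).mono hsub).diffContOnCl
    have hB : ∃ k < Real.pi / (c - c'), ∃ B,
        (L v) =O[Filter.comap (_root_.abs ∘ Complex.im) Filter.atTop ⊓
          Filter.principal (Complex.re ⁻¹' Set.Ioo c' c)]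
        fun z => Real.exp (B * Real.exp (k * |z.im|)) := by
      refine ⟨0, div_pos Real.pi_pos (by linarith), 0, ?_⟩
      rw [Asymptotics.isBigO_iff]
      refine ⟨C, ?_⟩
      have h1 : ∀ᶠ z : ℂ in Filter.comap (_root_.abs ∘ Complex.im) Filter.atTop ⊓
          Filter.principal (Complex.re ⁻¹' Set.Ioo c' c), Δ ≤ |z.im| :=
        Filter.Eventually.filter_mono inf_le_left
          (Filter.tendsto_comap.eventually (Filter.eventually_ge_atTop Δ))
      have h2 : ∀ᶠ z : ℂ in Filter.comap (_root_.abs ∘ Complex.im) Filter.atTop ⊓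
          Filter.principal (Complex.re ⁻¹' Set.Ioo c' c), z ∈ Complex.re ⁻¹' Set.Ioo c' c :=
        Filter.Eventually.filter_mono inf_le_right (Filter.eventually_principal.2 fun z hz => hz)
      filter_upwards [h1, h2] with z hz1 hz2
      have := hC z (le_of_lt hz2.1) (le_of_lt hz2.2) hz1
      simpa using this
    have h1 : ∀ z : ℂ, z.re = c' → ‖L v z‖ ≤ β v + β' v := by
      intro z hz
      have := hβ' v z hz
      simp only [Polynomial.eval_one, one_mul] at this
      have hβnn : (0:ℝ) ≤ β v := apply_nonneg β v
      linarith
    have h2 : ∀ z : ℂ, z.re = c → ‖L v z‖ ≤ β v + β' v := by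
      intro z hz
      have := hβ v z hz
      simp only [Polynomial.eval_one, one_mul] at this
      have hβnn : (0:ℝ) ≤ β' v := apply_nonneg β' v
      linarith
    exact PhragmenLindelof.vertical_strip hd hB h1 h2
      (by rw [hre]; linarith) (by rw [hre]; linarith)
  let f : V →+ ℂ :=
    { toFun := fun v => L v (1 / 2),
      map_zero' := by simp,
      map_add' := by intro a b; simp }
  have : Continuous f := by
    apply continuous_of_continuousAt_zero f
    rw [ContinuousAt, map_zero]
    apply squeeze_zero_norm (fun v => key v)
    have ht := ((hβc.add hβ'c).tendsto (0 : V))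
    simp at ht
    exact ht
  exact this
end
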